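/- Algorithm correctness for heap construction from suffix trie: given the suffix trie of S[1..n] (unique terminator), label each leaf with the starting position of its suffix; then, processing i = 1,...,n in order, move the label i from its leaf to the highest (closest to the root) ancestor that has not yet received a label (if all ancestors are labelled, leave it on the leaf). The resulting labelled set of nodes, restricted to labelled nodes, forms the position heap of S: it is prefix-closed, labels increase from parent to child among labelled nodes, and the path label of the node receiving label i is a prefix of S[i..n]. -/

import Mathlib

/-- The suffix-trie relabelling construction.  `trieAssign S i` is the list of
nodes of the suffix trie of `S` that have received labels `0, ..., i` (the
`j`-th entry is the node labelled `j`): the root (path label `[]`) is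
pre-labelled `0`, and for `i = 1, ..., n` the label `i` is moved from the leaf
of the suffix `S[i..n]` to its highest (shortest) unlabelled ancestor — i.e.
the shortest prefix of `S[i..n]` not yet labelled — or left on the leaf itself
if all its ancestors are labelled. -/
def trieAssign {α : Type} [DecidableEq α] (S : List α) : ℕ → List (List α)
  | 0 => [([] : List α)]
  | i + 1 =>
    let prev := trieAssign S i
    prev ++ [(((S.drop i).inits).find? (fun p => decide (p ∉ prev))).getD (S.drop i)]

lemma find?_inits {α : Type} :
    ∀ (s : List α) (P : List α → Bool) (e : List α), s.inits.find? P = some e →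
      P e = true ∧ e <+: s ∧ ∀ q, q <+: e → q ≠ e → P q = false := by
  intro s
  induction s with
  | nil =>
    intro P e h
    simp only [List.inits, List.find?] at h
    rcases hP : P [] with _ | _
    · simp [hP] at h
    · simp [hP] at h
      subst h
      refine ⟨hP, List.prefix_refl _, ?_⟩
      intro q hq hne
      exact absurd (List.prefix_nil.mp hq) hne
  | cons a t ih =>
    intro P e h
    rw [List.inits_cons, List.find?_cons] at h
    rcases hP : P [] with _ | _
    · rw [hP] at h
      rw [List.find?_map] at h
      rcases h' : List.find? (P ∘ fun t => a :: t) t.inits with _ | e'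
      · rw [h'] at h; simp at h
      · rw [h'] at h
        simp only [Option.map_some] at h
        obtain ⟨hPe', hpre, hstrict⟩ := ih (P ∘ fun t => a :: t) e' h'
        injection h with h; subst h
        refine ⟨hPe', List.cons_prefix_cons.mpr ⟨rfl, hpre⟩, ?_⟩
        intro q hq hne
        cases q with
        | nil => exact hP
        | cons x q' =>
          obtain ⟨hx, hq'⟩ := List.cons_prefix_cons.mp hq
          subst hx
          exact hstrict q' hq' (fun h => hne (by rw [h]))
    · rw [hP] at h
      injection h with h; subst h
      refine ⟨hP, List.nil_prefix, ?_⟩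
      intro q hq hne
      exact absurd (List.prefix_nil.mp hq) hne

lemma not_drop_prefix {α : Type} (S T : List α) (c : α) (hS : S = T ++ [c]) (hc : c ∉ T)
    {a b : ℕ} (hab : a < b) (hb : b < S.length) : ¬ (S.drop b <+: S.drop a) := by
  intro ⟨t, ht⟩
  have hlenS : S.length = T.length + 1 := by simp [hS]
  set m := S.length - 1 - b with hm
  have hmb : b + m = S.length - 1 := by omega
  have hmlt : m < (S.drop b).length := by
    rw [List.length_drop]; omega
  have h1 : (S.drop b)[m] = S[b + m]'(by omega) := List.getElem_drop
  have h2 : (S.drop b ++ t)[m]'(by rw [List.length_append]; omega) = (S.drop b)[m] :=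
    List.getElem_append_left hmlt
  have hma : m < (S.drop a).length := by
    rw [List.length_drop]; omega
  have h3 : (S.drop a)[m] = S[a + m]'(by omega) := List.getElem_drop
  have h4 : (S.drop a)[m]'hma = (S.drop b ++ t)[m]'(by rw [ht]; exact hma) := by
    congr 1
    exact ht.symm
  have hbm : S[b + m]'(by omega) = c := by
    have hT : b + m = T.length := by omega
    subst hS
    simp only [hT]
    exact List.getElem_concat_length rfl ..
  have ham : S[a + m]'(by omega) = T[a + m]'(by omega) := by
    subst hS
    exact List.getElem_append_left (by omega)
  have : c = T[a + m]'(by omega) := by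
    rw [← hbm, ← h1, ← h2, ← h4, h3, ham]
  exact hc (this ▸ List.getElem_mem _)

lemma trieAssign_key {α : Type} [DecidableEq α]
    (S T : List α) (c : α) (hS : S = T ++ [c]) (hc : c ∉ T) :
    ∀ i, i ≤ S.length →
      (trieAssign S i).length = i + 1 ∧
      (trieAssign S i)[0]? = some [] ∧
      (trieAssign S i).Nodup ∧
      (∀ p ∈ trieAssign S i, ∀ q : List α, q <+: p → q ∈ trieAssign S i) ∧
      (∀ a b : ℕ, ∀ p q : List α,
        (trieAssign S i)[a]? = some p → (trieAssign S i)[b]? = some q →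
        p <+: q → p ≠ q → a < b) ∧
      (∀ j : ℕ, 1 ≤ j → j ≤ i → ∀ p : List α,
        (trieAssign S i)[j]? = some p → p <+: S.drop (j - 1)) := by
  intro i
  induction i with
  | zero =>
    intro _
    refine ⟨rfl, rfl, by simp [trieAssign], ?_, ?_, ?_⟩
    · intro p hp q hq
      simp only [trieAssign, List.mem_singleton] at hp ⊢
      subst hp
      exact List.prefix_nil.mp hq
    · intro a b p q hp hq hpq hne
      simp only [trieAssign] at hp hq
      have ha : a = 0 := by
        by_contra h
        rw [List.getElem?_eq_none (by simp; omega)] at hp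
        exact nomatch hp
      have hb : b = 0 := by
        by_contra h
        rw [List.getElem?_eq_none (by simp; omega)] at hq
        exact nomatch hq
      subst ha hb
      simp at hp hq
      exact absurd (hp.trans hq.symm) hne
    · intro j hj1 hj2 p hp
      omega
  | succ i ih =>
    intro hi1
    obtain ⟨hlen, h0, hnd, hcl, hord, hpref⟩ := ih (by omega)
    set prev := trieAssign S i with hprev
    have hiS : i < S.length := by omega
    have hdrop : S.drop i ∉ prev := by
      intro hmem
      obtain ⟨j, hj⟩ := List.mem_iff_getElem?.mp hmem
      have hjlt : j < i + 1 := by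
        by_contra h
        rw [List.getElem?_eq_none (by omega)] at hj
        exact nomatch hj
      rcases Nat.eq_zero_or_pos j with hj0 | hj0
      · subst hj0
        rw [h0] at hj
        injection hj with hj
        have : S.length ≤ i := List.drop_eq_nil_iff.mp hj.symm
        omega
      · have := hpref j hj0 (by omega) _ hj
        exact not_drop_prefix S T c hS hc (a := j - 1) (b := i) (by omega) hiS this
    have hsome : ((S.drop i).inits.find? (fun p => decide (p ∉ prev))).isSome = true := by
      rw [List.find?_isSome]
      exact ⟨S.drop i, (List.mem_inits _ _).mpr (List.prefix_refl _), by simpa using hdrop⟩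
    obtain ⟨e, he⟩ := Option.isSome_iff_exists.mp hsome
    obtain ⟨hPe, hepre, hstrict⟩ := find?_inits _ _ _ he
    have heprev : e ∉ prev := by simpa using hPe
    have hstrict' : ∀ q : List α, q <+: e → q ≠ e → q ∈ prev := by
      intro q hq hne
      have := hstrict q hq hne
      simpa using this
    have hL : trieAssign S (i + 1) = prev ++ [e] := by
      simp only [trieAssign, ← hprev, he, Option.getD_some]
    rw [hL]
    have hget_lt : ∀ k, k < i + 1 → (prev ++ [e])[k]? = prev[k]? := by
      intro k hk
      rw [List.getElem?_append]
      rw [if_pos (by omega)]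
    have hget_top : (prev ++ [e])[i + 1]? = some e := by
      have : (prev ++ [e])[prev.length]? = some e := List.getElem?_concat_length
      rwa [hlen] at this
    refine ⟨by simp [hlen], ?_, ?_, ?_, ?_, ?_⟩
    · rw [hget_lt 0 (by omega)]; exact h0
    · rw [List.nodup_append]
      exact ⟨hnd, List.nodup_singleton e, by simp; intro a ha h; exact heprev (h ▸ ha)⟩
    · intro p hp q hq
      rw [List.mem_append] at hp ⊢
      rcases hp with hp | hp
      · exact Or.inl (hcl p hp q hq)
      · simp only [List.mem_singleton] at hp
        by_cases hqe : q = e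
        · exact Or.inr (by simp [hqe])
        · exact Or.inl (hstrict' q (hp ▸ hq) hqe)
    · intro a b p q hp hq hpq hne
      have hblt : b < i + 2 := by
        by_contra h
        rw [List.getElem?_eq_none (by simp [hlen]; omega)] at hq
        exact nomatch hq
      have halt : a < i + 2 := by
        by_contra h
        rw [List.getElem?_eq_none (by simp [hlen]; omega)] at hp
        exact nomatch hp
      rcases Nat.lt_or_ge b (i + 1) with hb | hb
      · rw [hget_lt b hb] at hq
        have hqprev : q ∈ prev := List.mem_iff_getElem?.mpr ⟨b, hq⟩
        have hap : a < i + 1 := by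
          by_contra h
          have ha : a = i + 1 := by omega
          subst ha
          rw [hget_top] at hp
          injection hp with hp
          exact heprev (hp ▸ (hcl q hqprev p hpq))
        rw [hget_lt a hap] at hp
        exact hord a b p q hp hq hpq hne
      · have hb' : b = i + 1 := by omega
        subst hb'
        rcases Nat.lt_or_ge a (i + 1) with ha | ha
        · omega
        · have ha' : a = i + 1 := by omega
          subst ha'
          rw [hget_top] at hp hq
          injection hp with hp; injection hq with hq
          exact absurd (hp.symm.trans hq) hne
    · intro j hj1 hj2 p hp
      rcases Nat.lt_or_ge j (i + 1) with hj | hj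
      · rw [hget_lt j hj] at hp
        exact hpref j hj1 (by omega) p hp
      · have hj' : j = i + 1 := by omega
        subst hj'
        rw [hget_top] at hp
        injection hp with hp
        subst hp
        simpa using hepre

/-- For `S[1..n]` with a unique terminator, the suffix-trie
relabelling construction produces the position heap of `S`: the labelled nodes
are pairwise distinct, form a prefix-closed set, labels increase strictly from
parents to children among labelled nodes, and the path label of the node
receiving label `i` is a prefix of `S[i..n]`. -/
theorem trieAssign_is_positionHeap
    {α : Type} [DecidableEq α]
    (S T : List α) (c : α) (hS : S = T ++ [c]) (hc : c ∉ T) :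
    (trieAssign S S.length).Nodup ∧
    (∀ p ∈ trieAssign S S.length, ∀ q : List α, q <+: p →
      q ∈ trieAssign S S.length) ∧
    (∀ i j : ℕ, ∀ p q : List α,
      (trieAssign S S.length)[i]? = some p → (trieAssign S S.length)[j]? = some q →
      p <+: q → p ≠ q → i < j) ∧
    (∀ i : ℕ, 1 ≤ i → i ≤ S.length → ∀ p : List α,
      (trieAssign S S.length)[i]? = some p → p <+: S.drop (i - 1)) := by
  obtain ⟨_, _, hnd, hcl, hord, hpref⟩ := trieAssign_key S T c hS hc S.length le_rfl
  exact ⟨hnd, hcl, hord, hpref⟩
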